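/- Let s, L, l1, l2 be integers with l1 − l2 ≥ 2, L ≥ 3 and l1 ≤ l2 + L, and consider the points B1 = (l2, s − l2), B2 = (l1, s − l1) and C = (l2 + L, s − l2) in ℤ×ℤ (so that the lattice path of the word a^L from B1 is horizontal and ends at C). Then the number of binary words p of length L such that the lattice path of p from B2 ends at C, the paths P_{B1}(a^L) and P_{B2}(p) have only the point C in common, and the paths P_{B2}(p) and P_{B2}(a^L) have only the point B2 in common, equals C(L − 2, l2 + L − l1). -/
import Mathlib


/-- The point of the lattice path of the binary word `w` started at `A` after
`t` steps: `A + (|w_t|_a, |w_t|_b)` where `w_t` is the prefix of `w` of length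
`t`.  The alphabet `{a, b}` is encoded by `Bool` with `a = true`, `b = false`. -/
def pathPt (A : ℤ × ℤ) (w : List Bool) (t : ℕ) : ℤ × ℤ :=
  (A.1 + ((w.take t).count true : ℤ), A.2 + ((w.take t).count false : ℤ))

/-- `P` is a common point of the lattice path of `w` from `A` and the lattice
path of `p` from `B`. -/
def CommonPt (A B : ℤ × ℤ) (w p : List Bool) (P : ℤ × ℤ) : Prop :=
  (∃ t ≤ w.length, pathPt A w t = P) ∧ (∃ t ≤ p.length, pathPt B p t = P)



lemma finS (n k : ℕ) : {l : List Bool | l.length = n ∧ l.count true = k}.Finite :=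
  (List.finite_length_eq Bool n).subset fun _ h => h.1

lemma ncard_words (n : ℕ) : ∀ k, {l : List Bool | l.length = n ∧ l.count true = k}.ncard = n.choose k := by
  induction n with
  | zero =>
    intro k
    cases k with
    | zero =>
      have : {l : List Bool | l.length = 0 ∧ l.count true = 0} = {[]} := by
        ext l; simp [List.length_eq_zero_iff]; rintro rfl; simp
      rw [this]; simp
    | succ k =>
      have : {l : List Bool | l.length = 0 ∧ l.count true = k+1} = ∅ := by
        ext l; simp [List.length_eq_zero_iff]; rintro rfl; simp
      rw [this]; simp
  | succ n ih =>
    intro k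
    cases k with
    | zero =>
      have : {l : List Bool | l.length = n+1 ∧ l.count true = 0}
          = (fun q => false :: q) '' {l : List Bool | l.length = n ∧ l.count true = 0} := by
        ext l
        constructor
        · rintro ⟨hlen, hc⟩
          cases l with
          | nil => simp at hlen
          | cons hd tl =>
            cases hd
            · exact ⟨tl, ⟨by simpa using hlen, by simpa using hc⟩, rfl⟩
            · simp at hc
        · rintro ⟨q, ⟨hq1, hq2⟩, rfl⟩
          exact ⟨by simp [hq1], by simp [hq2]⟩
      rw [this, Set.ncard_image_of_injective _ (fun a b h => by simpa using h), ih 0]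
      simp
    | succ k =>
      have : {l : List Bool | l.length = n+1 ∧ l.count true = k+1}
          = (fun q => true :: q) '' {l : List Bool | l.length = n ∧ l.count true = k}
            ∪ (fun q => false :: q) '' {l : List Bool | l.length = n ∧ l.count true = k+1} := by
        ext l
        constructor
        · rintro ⟨hlen, hc⟩
          cases l with
          | nil => simp at hlen
          | cons hd tl =>
            cases hd
            · exact Or.inr ⟨tl, ⟨by simpa using hlen, by simpa using hc⟩, rfl⟩
            · exact Or.inl ⟨tl, ⟨by simpa using hlen, by simpa using hc⟩, rfl⟩
        · rintro (⟨q, ⟨hq1, hq2⟩, rfl⟩ | ⟨q, ⟨hq1, hq2⟩, rfl⟩)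
          · exact ⟨by simp [hq1], by simp [hq2]⟩
          · exact ⟨by simp [hq1], by simp [hq2]⟩
      rw [this, Set.ncard_union_eq ?disj (((finS n k).image _)) (((finS n (k+1)).image _)),
        Set.ncard_image_of_injective _ (fun a b h => by simpa using h),
        Set.ncard_image_of_injective _ (fun a b h => by simpa using h), ih k, ih (k+1)]
      · rw [Nat.choose_succ_succ, Nat.add_comm]
      case disj =>
        rw [Set.disjoint_left]
        rintro l ⟨q, _, rfl⟩ ⟨r, _, h⟩
        simp at h

lemma count_tf (l : List Bool) : l.count true + l.count false = l.length := by
  induction l with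
  | nil => simp
  | cons hd tl ih => cases hd <;> simp [List.count_cons] <;> omega

lemma pathPt_replicate (A : ℤ × ℤ) (L t : ℕ) (ht : t ≤ L) :
    pathPt A (List.replicate L true) t = (A.1 + t, A.2) := by
  simp [pathPt, List.take_replicate, Nat.min_eq_left ht, List.count_replicate]

lemma take_eq_self {p : List Bool} {L : ℕ} (h : p.length = L) : p.take L = p := by
  rw [← h, List.take_length]

set_option maxHeartbeats 1000000 in
theorem stmt_11 (s l1 l2 : ℤ) (L : ℕ) (hd : 2 ≤ l1 - l2) (hL : 3 ≤ L)
    (hl1 : l1 ≤ l2 + L)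
    (B1 B2 C : ℤ × ℤ)
    (hB1 : B1 = (l2, s - l2)) (hB2 : B2 = (l1, s - l1)) (hC : C = (l2 + L, s - l2)) :
    {p : List Bool | p.length = L ∧ pathPt B2 p L = C ∧
        (∀ P, CommonPt B1 B2 (List.replicate L true) p P → P = C) ∧
        (∀ P, CommonPt B2 B2 p (List.replicate L true) P → P = B2)}.ncard
      = (L - 2).choose (l2 + L - l1).toNat := by
  set k := (l2 + L - l1).toNat with hkdef
  have hk : (k : ℤ) = l2 + L - l1 := Int.toNat_of_nonneg (by linarith)
  have hkL : (k : ℤ) ≤ (L : ℤ) - 2 := by omega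
  have hset : {p : List Bool | p.length = L ∧ pathPt B2 p L = C ∧
        (∀ P, CommonPt B1 B2 (List.replicate L true) p P → P = C) ∧
        (∀ P, CommonPt B2 B2 p (List.replicate L true) P → P = B2)}
      = (fun q => false :: (q ++ [false])) ''
        {q : List Bool | q.length = L - 2 ∧ q.count true = k} := by
    ext p
    simp only [Set.mem_setOf_eq, Set.mem_image]
    constructor
    · rintro ⟨hp1, hp2, hp3, hp4⟩
      have hpt : p.take L = p := take_eq_self hp1
      rw [hB2, hC] at hp2
      rw [pathPt, hpt, Prod.mk.injEq] at hp2
      obtain ⟨he1, he2⟩ := hp2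
      simp only at he1 he2
      have hct : (p.count true : ℤ) = l2 + L - l1 := by linarith
      have hcf : (p.count false : ℤ) = l1 - l2 := by linarith
      have hne : p ≠ [] := by intro h; rw [h] at hp1; simp at hp1; omega
      obtain ⟨hd', tl, rfl⟩ := List.exists_cons_of_ne_nil hne
      -- first letter is false
      have hhd : hd' = false := by
        by_contra h
        have hhd : hd' = true := by cases hd' with | false => exact absurd rfl h | true => rfl
        subst hhd
        have h1 : pathPt B2 (true :: tl) 1 = (l1 + 1, s - l1) := by
          simp [pathPt, hB2]
        have := hp4 (l1 + 1, s - l1)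
          ⟨⟨1, by simp, h1⟩,
           ⟨1, by simp; omega, by rw [pathPt_replicate B2 L 1 (by omega), hB2]; simp⟩⟩
        rw [hB2, Prod.mk.injEq] at this
        omega
      subst hhd
      -- last letter is false
      have hlast : (false :: tl).getLast (List.cons_ne_nil _ _) = false := by
        by_contra h
        have hlast : (false :: tl).getLast (List.cons_ne_nil _ _) = true := by
          cases hg : (false :: tl).getLast (List.cons_ne_nil _ _) with
          | false => exact absurd hg h
          | true => rfl
        set p := false :: tl with hp
        have hdec : p.dropLast ++ [true] = p := by
          rw [← hlast]; exact List.dropLast_append_getLast _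
        have hdl : p.dropLast.length = L - 1 := by
          rw [List.length_dropLast, hp1]
        have htake : p.take (L - 1) = p.dropLast := by
          rw [← hdec, List.take_append_of_le_length (by omega), ← hdl, List.take_length, List.dropLast_concat]
        have hcount_t : p.dropLast.count true + 1 = p.count true := by
          conv_rhs => rw [← hdec]
          simp
        have hcount_f : p.dropLast.count false = p.count false := by
          conv_rhs => rw [← hdec]
          simp
        have hpath : pathPt B2 p (L - 1) = (l2 + L - 1, s - l2) := by
          rw [pathPt, htake, hB2, Prod.mk.injEq]
          constructor <;> simp only
          · have : (p.dropLast.count true : ℤ) = p.count true - 1 := by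
              rw [← hcount_t]; push_cast; ring
            rw [this, hct]; ring
          · rw [hcount_f, hcf]; ring
        have hrep : pathPt B1 (List.replicate L true) (L - 1) = (l2 + L - 1, s - l2) := by
          rw [pathPt_replicate B1 L (L - 1) (by omega), hB1]
          have : ((L - 1 : ℕ) : ℤ) = (L : ℤ) - 1 := by omega
          rw [this, Prod.mk.injEq]
          constructor <;> ring
        have := hp3 (l2 + L - 1, s - l2)
          ⟨⟨L - 1, by simp, hrep⟩, ⟨L - 1, by rw [hp1]; omega, hpath⟩⟩
        rw [hC, Prod.mk.injEq] at this
        omega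
      -- decompose
      have htlne : tl ≠ [] := by
        intro h; rw [h] at hp1; simp at hp1; omega
      have hlast2 : tl.getLast htlne = false := by
        rwa [List.getLast_cons htlne] at hlast
      refine ⟨tl.dropLast, ⟨?_, ?_⟩, ?_⟩
      · rw [List.length_dropLast]
        simp at hp1; omega
      · have hdec : tl.dropLast ++ [false] = tl := by
          conv_rhs => rw [← List.dropLast_append_getLast htlne, hlast2]
        have : (false :: tl).count true = tl.dropLast.count true := by
          conv_lhs => rw [← hdec]
          simp
        omega
      · show false :: (tl.dropLast ++ [false]) = false :: tl
        congr 1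
        conv_rhs => rw [← List.dropLast_append_getLast htlne, hlast2]
    · rintro ⟨q, ⟨hq1, hq2⟩, rfl⟩
      set p := false :: (q ++ [false]) with hp
      have hlen : p.length = L := by simp [hp, hq1]; omega
      have hctn : p.count true = k := by simp [hp, hq2]
      have hcfn : p.count true + p.count false = L := by rw [← count_tf p] at hlen; omega
      have hct : (p.count true : ℤ) = l2 + L - l1 := by rw [hctn]; omega
      have hcf : (p.count false : ℤ) = l1 - l2 := by
        have : (p.count true : ℤ) + p.count false = L := by exact_mod_cast hcfn
        omega
      have hend : pathPt B2 p L = C := by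
        rw [pathPt, take_eq_self hlen, hB2, hC, Prod.mk.injEq]
        constructor <;> simp only
        · rw [hct]; ring
        · rw [hcf]; ring
      refine ⟨hlen, hend, ?_, ?_⟩
      · rintro P ⟨⟨t1, ht1, hP1⟩, ⟨t2, ht2, hP2⟩⟩
        rw [List.length_replicate] at ht1
        rw [pathPt_replicate B1 L t1 ht1, hB1] at hP1
        rw [hlen] at ht2
        -- second coordinates
        have hy : s - l1 + ((p.take t2).count false : ℤ) = s - l2 := by
          have := congrArg Prod.snd hP2
          rw [pathPt, hB2] at this
          simp only at this
          rw [this, ← hP1]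
        have hfull : ((p.take t2).count false : ℤ) = p.count false := by
          rw [hcf]; linarith
        have ht2L : t2 = L := by
          by_contra h
          have ht2' : t2 ≤ L - 1 := by omega
          have hfq : (false :: q).length = L - 1 := by simp [hq1]; omega
          have htake : p.take t2 = (false :: q).take t2 := by
            rw [hp, show (false :: (q ++ [false])) = (false :: q) ++ [false] by simp,
              List.take_append_of_le_length (by omega)]
          have h1 : (p.take t2).count false ≤ (false :: q).count false := by
            rw [htake]; exact (List.take_sublist _ _).count_le false
          have h2 : (false :: q).count false + 1 = p.count false := by
            rw [hp, show (false :: (q ++ [false])) = (false :: q) ++ [false] by simp]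
            simp
          have : ((p.take t2).count false : ℤ) < p.count false := by
            have := h1; have := h2; omega
          omega
        rw [ht2L, hend] at hP2
        exact hP2.symm
      · rintro P ⟨⟨t1, ht1, hP1⟩, ⟨t2, ht2, hP2⟩⟩
        rw [hlen] at ht1
        rw [List.length_replicate] at ht2
        rw [pathPt_replicate B2 L t2 ht2, hB2] at hP2
        have hy : s - l1 + ((p.take t1).count false : ℤ) = s - l1 := by
          have := congrArg Prod.snd hP1
          rw [pathPt, hB2] at this
          simp only at this
          rw [this, ← hP2]
        have h0 : (p.take t1).count false = 0 := by
          have : ((p.take t1).count false : ℤ) = 0 := by linarith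
          exact_mod_cast this
        have ht10 : t1 = 0 := by
          by_contra h
          have : p.take t1 = false :: (q ++ [false]).take (t1 - 1) := by
            rw [hp]
            cases t1 with
            | zero => omega
            | succ n => simp
          rw [this] at h0
          simp at h0
        rw [ht10] at hP1
        rw [← hP1, pathPt, hB2]
        simp
  rw [hset, Set.ncard_image_of_injective _ (fun a b h => by simpa using h)]
  have hL2 : k ≤ L - 2 := by omega
  exact ncard_words (L - 2) k
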